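/- Let (F_k)_{k∈ℕ} be a sequence in [0,1], let (γ_k) and (a_k) be real sequences, and suppose there are γ̄ ∈ [0,1), k₀ ∈ ℕ, and a real number a such that for all k ≥ k₀: 0 ≤ γ_k ≤ γ̄, F_{k+1} − a_k ≥ γ_k·(F_k − a_k), and a_k → a. Then liminf_{k→∞} F_k ≥ a. -/
import Mathlib


/-- Quantitative core of Theorem 2 (convergence to a local fixed point): if `F k ∈ [0,1]`,
`0 ≤ γ k ≤ γbar < 1` and `F (k+1) - a k ≥ γ k · (F k - a k)` for all `k ≥ k₀`, and
`a k → aLim`, then `liminf F ≥ aLim`. -/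
theorem liminf_ge_of_contraction_toward_limit
    (F γ a : ℕ → ℝ) (hF : ∀ k, F k ∈ Set.Icc (0 : ℝ) 1)
    (γbar : ℝ) (hγbar : γbar ∈ Set.Ico (0 : ℝ) 1) (k₀ : ℕ) (aLim : ℝ)
    (hγ : ∀ k ≥ k₀, 0 ≤ γ k ∧ γ k ≤ γbar)
    (hrec : ∀ k ≥ k₀, γ k * (F k - a k) ≤ F (k + 1) - a k)
    (ha : Filter.Tendsto a Filter.atTop (nhds aLim)) :
    aLim ≤ Filter.liminf F Filter.atTop := by
  obtain ⟨hγ0, hγ1⟩ := hγbar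
  have hcob : Filter.IsCoboundedUnder (· ≥ ·) Filter.atTop F :=
    (Filter.isBoundedUnder_of ⟨1, fun k => (hF k).2⟩).isCoboundedUnder_ge
  refine le_of_forall_pos_le_add ?_
  intro ε hε
  have hhalf : (0 : ℝ) < ε / 2 := by linarith
  obtain ⟨k₁, hk₁⟩ := Filter.eventually_atTop.mp
    (ha.eventually (eventually_ge_nhds (show aLim - ε / 2 < aLim by linarith)))
  set K := max k₀ k₁ with hK
  set t := aLim - ε / 2 with ht
  set C := max (t - F K) 0 with hC
  have hC0 : 0 ≤ C := le_max_right _ _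
  have key : ∀ n, -(γbar ^ n * C) ≤ F (K + n) - t := by
    intro n
    induction n with
    | zero =>
      simp only [pow_zero, one_mul, Nat.add_zero]
      have := le_max_left (t - F K) 0
      linarith
    | succ n ih =>
      set k := K + n with hk
      have hk0 : k₀ ≤ k := le_trans (le_max_left _ _) (Nat.le_add_right _ _)
      have hk1 : k₁ ≤ k := le_trans (le_max_right _ _) (Nat.le_add_right _ _)
      obtain ⟨hg0, hg1⟩ := hγ k hk0
      have hat : t ≤ a k := hk₁ k hk1
      have hr := hrec k hk0
      have step : γ k * (F k - t) ≤ F (k + 1) - t := by nlinarith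
      have hmain : -(γbar ^ (n + 1) * C) ≤ γ k * (F k - t) := by
        rcases le_or_gt 0 (F k - t) with hpos | hneg
        · have : 0 ≤ γ k * (F k - t) := mul_nonneg hg0 hpos
          have : 0 ≤ γbar ^ (n + 1) * C :=
            mul_nonneg (pow_nonneg hγ0 _) hC0
          linarith [mul_nonneg hg0 hpos]
        · have h1 : γbar * (F k - t) ≤ γ k * (F k - t) :=
            mul_le_mul_of_nonpos_right hg1 hneg.le
          have h2 : γbar * (-(γbar ^ n * C)) ≤ γbar * (F k - t) :=
            mul_le_mul_of_nonneg_left ih hγ0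
          calc -(γbar ^ (n + 1) * C) = γbar * (-(γbar ^ n * C)) := by ring
            _ ≤ γ k * (F k - t) := le_trans h2 h1
      have : F (k + 1) = F (K + (n + 1)) := by rw [hk]; ring_nf
      linarith [le_trans hmain step]
  have hpow : Filter.Tendsto (fun n => γbar ^ n * C) Filter.atTop (nhds 0) := by
    have := (tendsto_pow_atTop_nhds_zero_of_lt_one hγ0 hγ1).mul_const C
    simpa using this
  obtain ⟨N, hN⟩ := Filter.eventually_atTop.mp
    (hpow.eventually (eventually_le_nhds hhalf))
  have hev : ∀ᶠ k in Filter.atTop, aLim - ε ≤ F k := by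
    rw [Filter.eventually_atTop]
    refine ⟨K + N, fun k hk => ?_⟩
    obtain ⟨n, rfl⟩ := Nat.exists_eq_add_of_le (le_trans (Nat.le_add_right K N) hk)
    have hn : N ≤ n := by omega
    have h1 := key n
    have h2 := hN n hn
    have ht' : t = aLim - ε / 2 := ht
    clear_value t C K
    linarith
  have : aLim - ε ≤ Filter.liminf F Filter.atTop := Filter.le_liminf_of_le hcob hev
  linarith
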